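/- Fix a mode n, a row index i_n, a single column index k ∈ {1,…,K}, and λ > 0. Define r̂_i = x_i − Σ_{k'≠k} Π_{l=1}^N a^{(l)}_{i_l k'} for i ∈ Ω, and set p_i = Π_{l≠n} a^{(l)}_{i_l k}. Then the function mapping a scalar t ∈ ℝ to the value of the regularized loss L obtained by setting a^{(n)}_{i_n k} = t (all other entries of all factor matrices held fixed) attains its unique global minimum at t* = (Σ_{i∈Ω^{(n)}_{i_n}} r̂_i p_i) / (λ + Σ_{i∈Ω^{(n)}_{i_n}} p_i²). (The CDTF single-entry update rule, the C = 1 case of the paper's Theorem 1.) -/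

import Mathlib

open Finset

/-- The regularized tensor-factorization loss. -/
noncomputable def loss {N K : ℕ} (I : Fin N → ℕ)
    (Ω : Finset ((m : Fin N) → Fin (I m)))
    (x : ((m : Fin N) → Fin (I m)) → ℝ) (lam : ℝ)
    (A : (m : Fin N) → Fin (I m) → Fin K → ℝ) : ℝ :=
  (∑ i ∈ Ω, (x i - ∑ k : Fin K, ∏ m : Fin N, A m (i m) k) ^ 2)
    + lam * ∑ m : Fin N, ∑ j : Fin (I m), ∑ k : Fin K, A m j k ^ 2

/-- Replace the single entry `a^{(n)}_{i_n k}` by `t`, leaving all other entries of all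
factor matrices fixed. -/
noncomputable def updEntry {N K : ℕ} {I : Fin N → ℕ}
    (A : (m : Fin N) → Fin (I m) → Fin K → ℝ)
    (n : Fin N) (iN : Fin (I n)) (k : Fin K) (t : ℝ) :
    (m : Fin N) → Fin (I m) → Fin K → ℝ :=
  fun l j k' =>
    if (⟨l, j⟩ : Σ m, Fin (I m)) = ⟨n, iN⟩ ∧ k' = k then t else A l j k'

/-- `r̂_i = x_i − ∑_{k'≠k} ∏_l a^{(l)}_{i_l k'}`. -/
noncomputable def rhatOne {N K : ℕ} {I : Fin N → ℕ}
    (x : ((m : Fin N) → Fin (I m)) → ℝ)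
    (A : (m : Fin N) → Fin (I m) → Fin K → ℝ)
    (k : Fin K) : ((m : Fin N) → Fin (I m)) → ℝ :=
  fun i => x i - ∑ k' ∈ Finset.univ.erase k, ∏ m : Fin N, A m (i m) k'

/-- `p_i = ∏_{l≠n} a^{(l)}_{i_l k}`. -/
noncomputable def pProd {N K : ℕ} {I : Fin N → ℕ}
    (A : (m : Fin N) → Fin (I m) → Fin K → ℝ)
    (n : Fin N) (k : Fin K) : ((m : Fin N) → Fin (I m)) → ℝ :=
  fun i => ∏ l ∈ Finset.univ.erase n, A l (i l) k

/-- **CDTF single-entry update rule (the C = 1 case of the paper's Theorem 1).**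
For λ > 0, the regularized loss, viewed as a function of the single entry
`a^{(n)}_{i_n k}` (all other entries fixed), attains its unique global minimum at
`t* = (∑_{i∈Ω^{(n)}_{i_n}} r̂_i p_i) / (λ + ∑_{i∈Ω^{(n)}_{i_n}} p_i²)`. -/
theorem cdtf_entry_update_rule {N K : ℕ} (I : Fin N → ℕ) (hI : ∀ m, 1 ≤ I m)
    (Ω : Finset ((m : Fin N) → Fin (I m)))
    (x : ((m : Fin N) → Fin (I m)) → ℝ)
    (A : (m : Fin N) → Fin (I m) → Fin K → ℝ)
    (lam : ℝ) (hlam : 0 < lam)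
    (n : Fin N) (iN : Fin (I n)) (k : Fin K) :
    ∀ t : ℝ,
      t ≠ (∑ i ∈ Ω.filter (fun i => i n = iN), rhatOne x A k i * pProd A n k i) /
            (lam + ∑ i ∈ Ω.filter (fun i => i n = iN), pProd A n k i ^ 2) →
      loss I Ω x lam
          (updEntry A n iN k
            ((∑ i ∈ Ω.filter (fun i => i n = iN), rhatOne x A k i * pProd A n k i) /
              (lam + ∑ i ∈ Ω.filter (fun i => i n = iN), pProd A n k i ^ 2)))
        < loss I Ω x lam (updEntry A n iN k t) := by
  classical
  set F := Ω.filter (fun i => i n = iN) with hF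
  set S := ∑ i ∈ F, pProd A n k i ^ 2 with hS
  set B := ∑ i ∈ F, rhatOne x A k i * pProd A n k i with hB
  have hS0 : 0 ≤ S := Finset.sum_nonneg fun i _ => sq_nonneg _
  have ha : 0 < lam + S := by linarith
  set a := lam + S with haa
  set ts := B / a with hts
  have hentry : ∀ (t : ℝ) (l : Fin N) (j : Fin (I l)) (k' : Fin K),
      ¬((⟨l, j⟩ : Σ m, Fin (I m)) = ⟨n, iN⟩ ∧ k' = k) →
      updEntry A n iN k t l j k' = A l j k' := fun t l j k' h => if_neg h
  have hentry' : ∀ t : ℝ, updEntry A n iN k t n iN k = t := fun t => if_pos ⟨rfl, rfl⟩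
  have hprodk : ∀ (t : ℝ) (i : (m : Fin N) → Fin (I m)),
      ∏ m : Fin N, updEntry A n iN k t m (i m) k
        = if i n = iN then t * pProd A n k i else ∏ m : Fin N, A m (i m) k := by
    intro t i
    by_cases h : i n = iN
    · simp only [h, if_true]
      rw [← Finset.mul_prod_erase univ _ (mem_univ n)]
      have h1 : updEntry A n iN k t n (i n) k = t := by rw [h]; exact hentry' t
      rw [h1, pProd]
      congr 1
      refine Finset.prod_congr rfl fun m hm => ?_
      refine hentry t m (i m) k ?_
      rintro ⟨h2, -⟩
      exact (Finset.mem_erase.mp hm).1 (congrArg Sigma.fst h2)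
    · simp only [h, if_false]
      refine Finset.prod_congr rfl fun m _ => ?_
      refine hentry t m (i m) k ?_
      rintro ⟨h2, -⟩
      obtain ⟨h3, h4⟩ := Sigma.mk.inj_iff.mp h2
      subst h3
      exact h (eq_of_heq h4)
  have hresid : ∀ (t : ℝ) (i : (m : Fin N) → Fin (I m)),
      x i - ∑ k' : Fin K, ∏ m : Fin N, updEntry A n iN k t m (i m) k'
        = if i n = iN then rhatOne x A k i - t * pProd A n k i
          else x i - ∑ k' : Fin K, ∏ m : Fin N, A m (i m) k' := by
    intro t i
    rw [← Finset.add_sum_erase univ _ (mem_univ k)]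
    have herase : ∑ k' ∈ univ.erase k, ∏ m : Fin N, updEntry A n iN k t m (i m) k'
        = ∑ k' ∈ univ.erase k, ∏ m : Fin N, A m (i m) k' := by
      refine Finset.sum_congr rfl fun k' hk' => Finset.prod_congr rfl fun m _ => ?_
      exact hentry t m (i m) k' fun hcon => (Finset.mem_erase.mp hk').1 hcon.2
    rw [herase, hprodk]
    by_cases h : i n = iN
    · simp only [h, if_true, rhatOne]; ring
    · simp only [h, if_false]
      rw [← Finset.add_sum_erase univ (fun k' => ∏ m : Fin N, A m (i m) k') (mem_univ k)]
  have hreg : ∀ t : ℝ,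
      ∑ m : Fin N, ∑ j : Fin (I m), ∑ k' : Fin K, updEntry A n iN k t m j k' ^ 2
        = t ^ 2 - A n iN k ^ 2
          + ∑ m : Fin N, ∑ j : Fin (I m), ∑ k' : Fin K, A m j k' ^ 2 := by
    intro t
    have hdiff : ∑ m : Fin N, ∑ j : Fin (I m), ∑ k' : Fin K,
        (updEntry A n iN k t m j k' ^ 2 - A m j k' ^ 2) = t ^ 2 - A n iN k ^ 2 := by
      rw [Finset.sum_eq_single n]
      · rw [Finset.sum_eq_single iN]
        · rw [Finset.sum_eq_single k]
          · rw [hentry' t]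
          · intro k' _ hk'
            rw [hentry t n iN k' fun hcon => hk' hcon.2]; ring
          · simp
        · intro j _ hj
          have h5 : ∀ k' : Fin K, updEntry A n iN k t n j k' = A n j k' := by
            intro k'
            refine hentry t n j k' ?_
            rintro ⟨h2, -⟩
            obtain ⟨-, h4⟩ := Sigma.mk.inj_iff.mp h2
            exact hj (eq_of_heq h4)
          simp [h5]
        · simp
      · intro m _ hm
        have h5 : ∀ (j : Fin (I m)) (k' : Fin K), updEntry A n iN k t m j k' = A m j k' := by
          intro j k'
          refine hentry t m j k' ?_
          rintro ⟨h2, -⟩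
          exact hm (congrArg Sigma.fst h2)
        simp [h5]
      · simp
    have hsub : ∑ m : Fin N, ∑ j : Fin (I m), ∑ k' : Fin K,
        (updEntry A n iN k t m j k' ^ 2 - A m j k' ^ 2)
        = (∑ m : Fin N, ∑ j : Fin (I m), ∑ k' : Fin K, updEntry A n iN k t m j k' ^ 2)
          - ∑ m : Fin N, ∑ j : Fin (I m), ∑ k' : Fin K, A m j k' ^ 2 := by
      simp [Finset.sum_sub_distrib]
    linarith [hsub ▸ hdiff]
  set C0 : ℝ := (∑ i ∈ F, rhatOne x A k i ^ 2)
      + (∑ i ∈ Ω.filter (fun i => ¬ i n = iN),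
          (x i - ∑ k' : Fin K, ∏ m : Fin N, A m (i m) k') ^ 2)
      + lam * ((∑ m : Fin N, ∑ j : Fin (I m), ∑ k' : Fin K, A m j k' ^ 2)
          - A n iN k ^ 2) with hC0
  have hloss : ∀ t : ℝ, loss I Ω x lam (updEntry A n iN k t)
      = a * t ^ 2 - 2 * B * t + C0 := by
    intro t
    unfold loss
    rw [hreg t]
    have hdata : ∑ i ∈ Ω, (x i - ∑ k' : Fin K, ∏ m : Fin N, updEntry A n iN k t m (i m) k') ^ 2
        = ∑ i ∈ F, (rhatOne x A k i - t * pProd A n k i) ^ 2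
          + ∑ i ∈ Ω.filter (fun i => ¬ i n = iN),
              (x i - ∑ k' : Fin K, ∏ m : Fin N, A m (i m) k') ^ 2 := by
      rw [← Finset.sum_filter_add_sum_filter_not Ω (fun i => i n = iN)]
      congr 1
      · refine Finset.sum_congr rfl fun i hi => ?_
        rw [hresid t i, if_pos (Finset.mem_filter.mp hi).2]
      · refine Finset.sum_congr rfl fun i hi => ?_
        rw [hresid t i, if_neg (Finset.mem_filter.mp hi).2]
    rw [hdata]
    have hexp : ∑ i ∈ F, (rhatOne x A k i - t * pProd A n k i) ^ 2
        = (∑ i ∈ F, rhatOne x A k i ^ 2) - (2 * t) * B + t ^ 2 * S := by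
      rw [hS, hB]
      rw [Finset.sum_congr rfl (fun i _ => show
        (rhatOne x A k i - t * pProd A n k i) ^ 2
          = rhatOne x A k i ^ 2 - (2 * t) * (rhatOne x A k i * pProd A n k i)
            + t ^ 2 * pProd A n k i ^ 2 from by ring)]
      rw [Finset.sum_add_distrib, Finset.sum_sub_distrib, ← Finset.mul_sum, ← Finset.mul_sum]
    rw [hexp, hC0, haa]
    ring
  intro t hne
  rw [hloss t, hloss ts]
  have hBa : B = a * ts := by rw [hts, mul_div_assoc', eq_div_iff ha.ne']; ring
  have heq : a * t ^ 2 - 2 * B * t - (a * ts ^ 2 - 2 * B * ts) = a * (t - ts) ^ 2 := by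
    rw [hBa]; ring
  have h1 : t - ts ≠ 0 := sub_ne_zero.mpr hne
  have h2 : 0 < (t - ts) ^ 2 := by positivity
  nlinarith [mul_pos ha h2]
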